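/- Let G be a group and U, V open subgroups such that the set Mor(U,U) of right cosets of U that are also left cosets of U is finite (e.g., because each such coset is a double coset of U and U has finitely many double cosets). If there exists a right coset of U that is a left coset of V, then the set Mor(U,V) of right cosets of U that are left cosets of V has the same cardinality as Mor(U,U); in particular it is finite. -/

import Mathlib

open Pointwise

/-- `Mor U V` is the set of subsets of `G` that are simultaneously a right coset
of `U` and a left coset of `V`. -/
def Mor {G : Type*} [Group G] (U V : Subgroup G) : Set (Set G) :=
  {A : Set G | (∃ g : G, A = (U : Set G) * ({g} : Set G)) ∧ ∃ g : G, A = ({g} : Set G) * (V : Set G)}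

/-- If `Mor(U,U)` is finite and there exists a right coset of `U` that is a left
coset of `V`, then `Mor(U,V)` has the same cardinality as `Mor(U,U)`; in
particular it is finite. -/
theorem mor_equiv_of_nonempty (G : Type*) [Group G] [TopologicalSpace G]
    [IsTopologicalGroup G] (U V : Subgroup G)
    (hU : IsOpen (U : Set G)) (hV : IsOpen (V : Set G))
    (hfin : (Mor U U).Finite) (hne : (Mor U V).Nonempty) :
    Nonempty (Mor U U ≃ Mor U V) ∧ (Mor U V).Finite := by
  obtain ⟨B, ⟨b, hb⟩, b', hb'⟩ := hne
  have hUU : (U : Set G) * (U : Set G) = (U : Set G) := coe_mul_coe U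
  have hVV : (V : Set G) * (V : Set G) = (V : Set G) := coe_mul_coe V
  -- B⁻¹ computations
  have hBinvL : B⁻¹ = ({b⁻¹} : Set G) * (U : Set G) := by
    rw [hb, mul_inv_rev, Set.inv_singleton, inv_coe_set]
  have hBinvR : B⁻¹ = (V : Set G) * ({b'⁻¹} : Set G) := by
    rw [hb', mul_inv_rev, Set.inv_singleton, inv_coe_set]
  have hBB : B * B⁻¹ = (U : Set G) := by
    rw [hBinvL, hb, mul_assoc, ← mul_assoc ({b} : Set G), Set.singleton_mul_singleton,
      mul_inv_cancel, Set.singleton_one, one_mul, hUU]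
  have hBB' : B⁻¹ * B = (V : Set G) := by
    rw [hBinvR, hb', mul_assoc, ← mul_assoc ({b'⁻¹} : Set G), Set.singleton_mul_singleton,
      inv_mul_cancel, Set.singleton_one, one_mul, hVV]
  -- forward map is well-defined
  have hfwd : ∀ A ∈ Mor U U, A * B ∈ Mor U V := by
    rintro A ⟨⟨a, ha⟩, a', ha'⟩
    constructor
    · refine ⟨a * b, ?_⟩
      have hAU : A * (U : Set G) = A := by rw [ha', mul_assoc, hUU]
      rw [hb, ← mul_assoc, hAU, ha, mul_assoc, Set.singleton_mul_singleton]
    · refine ⟨a' * b', ?_⟩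
      have hUB : (U : Set G) * B = B := by rw [hb, ← mul_assoc, hUU]
      rw [ha', mul_assoc, hUB, hb', ← mul_assoc, Set.singleton_mul_singleton]
  -- backward map is well-defined
  have hbwd : ∀ C ∈ Mor U V, C * B⁻¹ ∈ Mor U U := by
    rintro C ⟨⟨c, hc⟩, c', hc'⟩
    constructor
    · refine ⟨c * b'⁻¹, ?_⟩
      have hCV : C * (V : Set G) = C := by rw [hc', mul_assoc, hVV]
      rw [hBinvR, ← mul_assoc, hCV, hc, mul_assoc, Set.singleton_mul_singleton]
    · refine ⟨c' * b⁻¹, ?_⟩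
      have hVB : (V : Set G) * B⁻¹ = B⁻¹ := by rw [hBinvR, ← mul_assoc, hVV]
      rw [hc', mul_assoc, hVB, hBinvL, ← mul_assoc, Set.singleton_mul_singleton]
  have hli : ∀ A ∈ Mor U U, A * B * B⁻¹ = A := by
    rintro A ⟨⟨a, ha⟩, a', ha'⟩
    rw [mul_assoc, hBB, ha', mul_assoc, hUU]
  have hri : ∀ C ∈ Mor U V, C * B⁻¹ * B = C := by
    rintro C ⟨⟨c, hc⟩, c', hc'⟩
    rw [mul_assoc, hBB', hc', mul_assoc, hVV]
  have e : Mor U U ≃ Mor U V :=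
    { toFun := fun A => ⟨A.1 * B, hfwd A.1 A.2⟩
      invFun := fun C => ⟨C.1 * B⁻¹, hbwd C.1 C.2⟩
      left_inv := fun A => Subtype.ext (hli A.1 A.2)
      right_inv := fun C => Subtype.ext (hri C.1 C.2) }
  refine ⟨⟨e⟩, ?_⟩
  have : Finite (Mor U U) := hfin.to_subtype
  have : Finite (Mor U V) := Finite.of_equiv _ e
  exact Set.toFinite _
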